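/- In an undirected connected graph where all pairwise deltas satisfy the triangle inequality and Delta = Phi, the storage cost of a minimum spanning tree is at most the storage cost of a shortest-path tree, and the sum of recreation costs of a shortest-path tree is at most the sum of recreation costs of a minimum spanning tree; moreover if a single spanning tree is simultaneously an MST and an SPT, it is optimal for every one of the six optimization problems. -/

import Mathlib

/-- A spanning tree (arborescence) rooted at `v0`, given by a parent map. -/
structure ArbTree (V : Type) (v0 : V) where
  parent : V → V
  root_fix : parent v0 = v0
  reaches : ∀ v, ∃ n, parent^[n] v = v0

/-- The number of tree edges on the path from `v` up to the root. -/
noncomputable def ArbTree.depth {V : Type} [DecidableEq V] {v0 : V}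
    (T : ArbTree V v0) (v : V) : ℕ :=
  Nat.find (T.reaches v)

/-- The recreation cost of `v`: total weight of the tree path from `v0` to `v`. -/
noncomputable def recCost {V : Type} [DecidableEq V] {v0 : V}
    (T : ArbTree V v0) (w : V → V → ℝ) (v : V) : ℝ :=
  ∑ i ∈ Finset.range (T.depth v), w (T.parent^[i+1] v) (T.parent^[i] v)

/-- The storage cost of the tree: total weight of its edges. -/
noncomputable def treeCost {V : Type} [Fintype V] [DecidableEq V] {v0 : V}
    (T : ArbTree V v0) (w : V → V → ℝ) : ℝ :=
  ∑ v ∈ Finset.univ.filter (· ≠ v0), w (T.parent v) v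

/-- The tree is a spanning tree of the graph with adjacency `Adj`. -/
def IsSpanning {V : Type} {v0 : V} (Adj : V → V → Prop) (T : ArbTree V v0) : Prop :=
  ∀ v, v ≠ v0 → Adj (T.parent v) v

/-- `l` is a walk from `a` to `b` in the graph with adjacency `Adj`. -/
def IsWalk {V : Type} (Adj : V → V → Prop) (a b : V) (l : List V) : Prop :=
  l.Chain' Adj ∧ l.head? = some a ∧ l.getLast? = some b

/-- Total weight of a walk. -/
def walkCost {V : Type} (w : V → V → ℝ) : List V → ℝ
  | [] => 0
  | [_] => 0
  | a :: b :: rest => w a b + walkCost w (b :: rest)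

/-- Shortest-path distance from `a` to `b`. -/
noncomputable def graphDist {V : Type} (Adj : V → V → Prop) (w : V → V → ℝ)
    (a b : V) : ℝ :=
  sInf {c | ∃ l, IsWalk Adj a b l ∧ walkCost w l = c}

section Aux

variable {V : Type} [DecidableEq V] {v0 : V}

lemma ArbTree.depth_v0 (T : ArbTree V v0) : T.depth v0 = 0 :=
  Nat.eq_zero_of_le_zero (Nat.find_le (by simp))

lemma ArbTree.eq_of_depth_zero (T : ArbTree V v0) {v : V} (h : T.depth v = 0) : v = v0 := by
  have := Nat.find_spec (T.reaches v)
  rw [show Nat.find (T.reaches v) = T.depth v from rfl, h] at this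
  exact this

lemma ArbTree.depth_succ (T : ArbTree V v0) {v : V} (hv : v ≠ v0) :
    T.depth v = T.depth (T.parent v) + 1 := by
  have h1 : T.parent^[T.depth (T.parent v) + 1] v = v0 := by
    rw [Function.iterate_succ_apply]
    exact Nat.find_spec (T.reaches (T.parent v))
  have h2 : T.depth v ≤ T.depth (T.parent v) + 1 := Nat.find_le h1
  have h3 : T.depth v ≠ 0 := fun h => hv (T.eq_of_depth_zero h)
  obtain ⟨k, hk⟩ := Nat.exists_eq_succ_of_ne_zero h3
  have hspec : T.parent^[T.depth v] v = v0 := Nat.find_spec (T.reaches v)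
  rw [hk, Function.iterate_succ_apply] at hspec
  have h5 : T.depth (T.parent v) ≤ k := Nat.find_le hspec
  omega

lemma recCost_v0 (T : ArbTree V v0) (w : V → V → ℝ) : recCost T w v0 = 0 := by
  simp [recCost, T.depth_v0]

lemma recCost_succ (T : ArbTree V v0) (w : V → V → ℝ) {v : V} (hv : v ≠ v0) :
    recCost T w v = recCost T w (T.parent v) + w (T.parent v) v := by
  unfold recCost
  rw [T.depth_succ hv, Finset.sum_range_succ']
  simp [Function.iterate_succ_apply]

lemma walkCost_nonneg (w : V → V → ℝ) (hw : ∀ a b, 0 ≤ w a b) :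
    ∀ l : List V, 0 ≤ walkCost w l := by
  intro l
  induction l with
  | nil => simp [walkCost]
  | cons a t ih =>
    cases t with
    | nil => simp [walkCost]
    | cons b r =>
      have : walkCost w (a :: b :: r) = w a b + walkCost w (b :: r) := rfl
      rw [this]
      exact add_nonneg (hw a b) ih

lemma walkCost_append_single (w : V → V → ℝ) (a b : V) :
    ∀ l : List V, walkCost w (l ++ [a, b]) = walkCost w (l ++ [a]) + w a b := by
  intro l
  induction l with
  | nil => simp [walkCost]
  | cons c t ih =>
    cases t with
    | nil => simp [walkCost]
    | cons d r =>
      have h1 : walkCost w ((c :: d :: r) ++ [a, b])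
          = w c d + walkCost w ((d :: r) ++ [a, b]) := rfl
      have h2 : walkCost w ((c :: d :: r) ++ [a])
          = w c d + walkCost w ((d :: r) ++ [a]) := rfl
      rw [h1, h2, ih]; ring

lemma exists_walk_of_spanning {Adj : V → V → Prop} (T : ArbTree V v0)
    (hT : IsSpanning Adj T) (w : V → V → ℝ) (v : V) :
    ∃ l, IsWalk Adj v0 v l ∧ walkCost w l = recCost T w v := by
  suffices h : ∀ n v, T.depth v ≤ n → ∃ l, IsWalk Adj v0 v l ∧ walkCost w l = recCost T w v from
    h (T.depth v) v le_rfl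
  intro n
  induction n with
  | zero =>
    intro v hv
    have hv0 : v = v0 := T.eq_of_depth_zero (Nat.le_zero.mp hv)
    rw [hv0]
    exact ⟨[v0], ⟨List.isChain_singleton _, rfl, rfl⟩, by simp [walkCost, recCost_v0]⟩
  | succ n ih =>
    intro v hv
    by_cases hv0 : v = v0
    · rw [hv0]
      exact ⟨[v0], ⟨List.isChain_singleton _, rfl, rfl⟩, by simp [walkCost, recCost_v0]⟩
    · have hd : T.depth v = T.depth (T.parent v) + 1 := T.depth_succ hv0
      have hle : T.depth (T.parent v) ≤ n := by omega
      obtain ⟨l, ⟨hchain, hhead, hlast⟩, hcost⟩ := ih (T.parent v) hle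
      have hlne : l ≠ [] := by
        intro h; subst h; simp at hhead
      have hl : l = l.dropLast ++ [T.parent v] := by
        conv_lhs => rw [← List.dropLast_append_getLast hlne]
        congr 1
        rw [List.getLast?_eq_getLast hlne] at hlast
        simpa using hlast
      refine ⟨l ++ [v], ⟨?_, ?_, ?_⟩, ?_⟩
      · rw [List.Chain', List.isChain_append]
        refine ⟨hchain, List.isChain_singleton _, ?_⟩
        intro x hx y hy
        rw [hlast] at hx
        simp at hx hy
        subst hx; subst hy
        exact hT v hv0
      · rw [List.head?_append_of_ne_nil _ hlne]  -- may need adjusting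
        exact hhead
      · simp
      · rw [hl, List.append_assoc]
        have : ([T.parent v] ++ [v] : List V) = [T.parent v, v] := rfl
        rw [this, walkCost_append_single, ← hl, hcost, recCost_succ T w hv0]

lemma graphDist_le_recCost {Adj : V → V → Prop} (T : ArbTree V v0)
    (hT : IsSpanning Adj T) (w : V → V → ℝ) (hw : ∀ a b, 0 ≤ w a b) (v : V) :
    graphDist Adj w v0 v ≤ recCost T w v := by
  obtain ⟨l, hwalk, hcost⟩ := exists_walk_of_spanning T hT w v
  exact csInf_le ⟨0, fun c ⟨l', _, hc⟩ => hc ▸ walkCost_nonneg w hw l'⟩ ⟨l, hwalk, hcost⟩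

end Aux

/-- the storage cost of an MST is at most that of an SPT; the sum of
recreation costs of an SPT is at most that of an MST; and a spanning tree that is
simultaneously an MST and an SPT is optimal for all six optimization problems. -/
theorem stmt19 {V : Type} [Fintype V] [DecidableEq V] [Nonempty V]
    (Adj : V → V → Prop) (hsym : ∀ a b, Adj a b → Adj b a)
    (w : V → V → ℝ) (hwsym : ∀ a b, w a b = w b a) (hw : ∀ a b, 0 ≤ w a b)
    (v0 : V) (hconn : ∀ a b, ∃ l, IsWalk Adj a b l)
    (Tm : ArbTree V v0) (hTm : IsSpanning Adj Tm)
    (hTmMin : ∀ T' : ArbTree V v0, IsSpanning Adj T' → treeCost Tm w ≤ treeCost T' w)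
    (Ts : ArbTree V v0) (hTs : IsSpanning Adj Ts)
    (hTsSpt : ∀ v, recCost Ts w v = graphDist Adj w v0 v)
    (T : ArbTree V v0) (hT : IsSpanning Adj T)
    (hTMst : ∀ T' : ArbTree V v0, IsSpanning Adj T' → treeCost T w ≤ treeCost T' w)
    (hTSpt : ∀ v, recCost T w v = graphDist Adj w v0 v) :
    -- MST storage ≤ SPT storage, and SPT sum recreation ≤ MST sum recreation
    (treeCost Tm w ≤ treeCost Ts w) ∧
    ((∑ v, recCost Ts w v) ≤ ∑ v, recCost Tm w v) ∧
    -- Problem 1: minimize storage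
    (∀ T' : ArbTree V v0, IsSpanning Adj T' → treeCost T w ≤ treeCost T' w) ∧
    -- Problem 2: minimize each recreation cost (hence the max)
    (∀ T' : ArbTree V v0, IsSpanning Adj T' →
      (∀ v, recCost T w v ≤ recCost T' w v) ∧
      Finset.univ.sup' Finset.univ_nonempty (recCost T w) ≤
        Finset.univ.sup' Finset.univ_nonempty (recCost T' w)) ∧
    -- Problem 3: minimize sum recreation subject to storage ≤ β
    (∀ β : ℝ, treeCost T w ≤ β → ∀ T' : ArbTree V v0, IsSpanning Adj T' →
      treeCost T' w ≤ β → (∑ v, recCost T w v) ≤ ∑ v, recCost T' w v) ∧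
    -- Problem 4: minimize max recreation subject to storage ≤ β
    (∀ β : ℝ, treeCost T w ≤ β → ∀ T' : ArbTree V v0, IsSpanning Adj T' →
      treeCost T' w ≤ β →
      Finset.univ.sup' Finset.univ_nonempty (recCost T w) ≤
        Finset.univ.sup' Finset.univ_nonempty (recCost T' w)) ∧
    -- Problem 5: minimize storage subject to sum recreation ≤ θ
    (∀ θ : ℝ, (∑ v, recCost T w v) ≤ θ → ∀ T' : ArbTree V v0, IsSpanning Adj T' →
      (∑ v, recCost T' w v) ≤ θ → treeCost T w ≤ treeCost T' w) ∧
    -- Problem 6: minimize storage subject to max recreation ≤ θ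
    (∀ θ : ℝ, Finset.univ.sup' Finset.univ_nonempty (recCost T w) ≤ θ →
      ∀ T' : ArbTree V v0, IsSpanning Adj T' →
      Finset.univ.sup' Finset.univ_nonempty (recCost T' w) ≤ θ →
      treeCost T w ≤ treeCost T' w) := by
  have key : ∀ (T' : ArbTree V v0), IsSpanning Adj T' → ∀ v,
      recCost T w v ≤ recCost T' w v := by
    intro T' hT' v
    rw [hTSpt v]
    exact graphDist_le_recCost T' hT' w hw v
  have keyTs : ∀ (T' : ArbTree V v0), IsSpanning Adj T' → ∀ v,
      recCost Ts w v ≤ recCost T' w v := by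
    intro T' hT' v
    rw [hTsSpt v]
    exact graphDist_le_recCost T' hT' w hw v
  have supmono : ∀ (T' : ArbTree V v0), IsSpanning Adj T' →
      Finset.univ.sup' Finset.univ_nonempty (recCost T w) ≤
        Finset.univ.sup' Finset.univ_nonempty (recCost T' w) := by
    intro T' hT'
    apply Finset.sup'_le
    intro v _
    exact le_trans (key T' hT' v) (Finset.le_sup' _ (Finset.mem_univ v))
  refine ⟨hTmMin Ts hTs, Finset.sum_le_sum fun v _ => keyTs Tm hTm v,
    hTMst, fun T' hT' => ⟨key T' hT', supmono T' hT'⟩,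
    fun β _ T' hT' _ => Finset.sum_le_sum fun v _ => key T' hT' v,
    fun β _ T' hT' _ => supmono T' hT',
    fun θ _ T' hT' _ => hTMst T' hT',
    fun θ _ T' hT' _ => hTMst T' hT'⟩
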